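/- Homogeneity of the curve x⁴ − x²y² + (1/4)y⁴ = 1: for every t ∈ ℝ let R_t ∈ GL(2,ℝ) be the matrix with rows (cosh t, (1/√2)·sinh t) and (√2·sinh t, cosh t). Then h_{0,1/4}(R_t·v) = h_{0,1/4}(v) for all v ∈ ℝ² and all t ∈ ℝ, and the family {R_t} acts transitively on H_{0,1/4}: for all p, q ∈ H_{0,1/4} there exists t ∈ ℝ with R_t·p = q. In particular H_{0,1/4} is a homogeneous space under linear automorphisms of h_{0,1/4}. -/

import Mathlib

/-!
Common definitions: the quartic polynomial `hLK L K (x,y) = x⁴ − x²y² + L·x·y³ + K·y⁴` on ℝ²,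
the Hessian determinant of a function on ℝ², and the curve `Hcurve L K = H_{L,K}`,
the connected component containing (1,0) of the hyperbolic points on the level set {h = 1}.
-/

noncomputable section
open Matrix

/-- `h_{L,K}(x,y) = x⁴ − x²y² + L·x·y³ + K·y⁴`. -/
def hLK (L K : ℝ) (v : Fin 2 → ℝ) : ℝ :=
  v 0 ^ 4 - v 0 ^ 2 * v 1 ^ 2 + L * v 0 * v 1 ^ 3 + K * v 1 ^ 4

/-- Determinant of the Hessian matrix of `f : ℝ² → ℝ` at `p`. -/
def hessDet2 (f : (Fin 2 → ℝ) → ℝ) (p : Fin 2 → ℝ) : ℝ :=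
  Matrix.det (Matrix.of fun i j : Fin 2 =>
    iteratedFDeriv ℝ 2 f p ![Pi.single i 1, Pi.single j 1])

/-- `H_{L,K}`: the connected component containing `(1,0)` of
`{p ∈ ℝ² : h_{L,K}(p) = 1 and p is a hyperbolic point of h_{L,K}}`. -/
def Hcurve (L K : ℝ) : Set (Fin 2 → ℝ) :=
  connectedComponentIn {p | hLK L K p = 1 ∧ hessDet2 (hLK L K) p < 0} ![1, 0]

namespace HomogAux

abbrev pr (i : Fin 2) : (Fin 2 → ℝ) →L[ℝ] ℝ := ContinuousLinearMap.proj i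

def Dh (p : Fin 2 → ℝ) : (Fin 2 → ℝ) →L[ℝ] ℝ :=
  (4*p 0^3 - 2*p 0*p 1^2) • pr 0 + (p 1^3 - 2*p 0^2*p 1) • pr 1

lemma hasFDerivAt_h (p : Fin 2 → ℝ) : HasFDerivAt (hLK 0 (1/4)) (Dh p) p := by
  have h0 : HasFDerivAt (fun v : Fin 2 → ℝ => v 0) (pr 0) p := (pr 0).hasFDerivAt
  have h1 : HasFDerivAt (fun v : Fin 2 → ℝ => v 1) (pr 1) p := (pr 1).hasFDerivAt
  have := ((((h0.mul h0).mul (h0.mul h0)).sub ((h0.mul h0).mul (h1.mul h1))).add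
    ((((h1.mul h1).mul (h1.mul h1))).const_mul ((1:ℝ)/4)))
  refine (this.congr_fderiv ?_).congr_of_eventuallyEq
    (Filter.Eventually.of_forall fun v => ?_)
  · ext v
    simp [Dh, ContinuousLinearMap.smul_apply, ContinuousLinearMap.proj_apply]
    ring
  · simp [hLK]; ring

def Dh2 (p : Fin 2 → ℝ) : (Fin 2 → ℝ) →L[ℝ] ((Fin 2 → ℝ) →L[ℝ] ℝ) :=
  (((12*p 0^2 - 2*p 1^2) • pr 0 + (-(4*p 0*p 1)) • pr 1).smulRight (pr 0)) +
  (((-(4*p 0*p 1)) • pr 0 + (3*p 1^2 - 2*p 0^2) • pr 1).smulRight (pr 1))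

lemma hasFDerivAt_Dh (p : Fin 2 → ℝ) : HasFDerivAt Dh (Dh2 p) p := by
  have h0 : HasFDerivAt (fun v : Fin 2 → ℝ => v 0) (pr 0) p := (pr 0).hasFDerivAt
  have h1 : HasFDerivAt (fun v : Fin 2 → ℝ => v 1) (pr 1) p := (pr 1).hasFDerivAt
  have ha : HasFDerivAt (fun v : Fin 2 → ℝ => 4*v 0^3 - 2*v 0*v 1^2)
      ((12*p 0^2 - 2*p 1^2) • pr 0 + (-(4*p 0*p 1)) • pr 1) p := by
    have := (((h0.mul h0).mul h0).const_mul (4:ℝ)).sub (((h0.mul (h1.mul h1))).const_mul (2:ℝ))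
    refine (this.congr_fderiv ?_).congr_of_eventuallyEq
      (Filter.Eventually.of_forall fun v => by simp only [Pi.mul_apply, Pi.sub_apply]; ring)
    ext v
    simp [ContinuousLinearMap.smul_apply, ContinuousLinearMap.proj_apply]
    ring
  have hb : HasFDerivAt (fun v : Fin 2 → ℝ => v 1^3 - 2*v 0^2*v 1)
      ((-(4*p 0*p 1)) • pr 0 + (3*p 1^2 - 2*p 0^2) • pr 1) p := by
    have := ((h1.mul h1).mul h1).sub ((((h0.mul h0).const_mul (2:ℝ)).mul h1))
    refine (this.congr_fderiv ?_).congr_of_eventuallyEq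
      (Filter.Eventually.of_forall fun v => by simp only [Pi.mul_apply, Pi.sub_apply]; ring)
    ext v
    simp [ContinuousLinearMap.smul_apply, ContinuousLinearMap.proj_apply]
    ring
  exact (ha.smul_const (pr 0)).add (hb.smul_const (pr 1))

lemma hessDet2_h (p : Fin 2 → ℝ) :
    hessDet2 (hLK 0 (1/4)) p = -6*(2*p 0^2 - p 1^2)^2 := by
  have hf : fderiv ℝ (hLK 0 (1/4)) = Dh := funext fun p => (hasFDerivAt_h p).fderiv
  have key : ∀ i j : Fin 2, iteratedFDeriv ℝ 2 (hLK 0 (1/4)) p ![Pi.single i 1, Pi.single j 1]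
      = Dh2 p (Pi.single i 1) (Pi.single j 1) := by
    intro i j
    rw [iteratedFDeriv_two_apply, hf, (hasFDerivAt_Dh p).fderiv]
    simp
  unfold hessDet2
  rw [Matrix.det_fin_two]
  simp only [Matrix.of_apply, key]
  simp [Dh2, ContinuousLinearMap.smul_apply, ContinuousLinearMap.proj_apply, Pi.single]
  ring

/-- The matrix R_t. -/
def R (t : ℝ) : Matrix (Fin 2) (Fin 2) ℝ :=
  !![Real.cosh t, Real.sinh t / Real.sqrt 2; Real.sqrt 2 * Real.sinh t, Real.cosh t]

lemma hr2 : (Real.sqrt 2)^2 = 2 := Real.sq_sqrt (by norm_num)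
lemma hrpos : (0:ℝ) < Real.sqrt 2 := Real.sqrt_pos.mpr (by norm_num)

lemma hval (v : Fin 2 → ℝ) : hLK 0 (1/4) v = (v 0^2 - v 1^2/2)^2 := by
  simp [hLK]; ring

lemma mulVec_eval (t : ℝ) (v : Fin 2 → ℝ) :
    (R t).mulVec v = ![Real.cosh t * v 0 + Real.sinh t / Real.sqrt 2 * v 1,
      Real.sqrt 2 * Real.sinh t * v 0 + Real.cosh t * v 1] := by
  funext i
  fin_cases i <;>
    simp [R, Matrix.mulVec, dotProduct, Fin.sum_univ_two]

lemma div_aux (s : ℝ) : s / Real.sqrt 2 = s * Real.sqrt 2 / 2 := by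
  rw [div_eq_div_iff hrpos.ne' (by norm_num : (2:ℝ) ≠ 0)]
  linear_combination (-s) * hr2

lemma mul_aux (a b : ℝ) : a / Real.sqrt 2 * (Real.sqrt 2 * b) = a * b := by
  field_simp

lemma invariance (t : ℝ) (v : Fin 2 → ℝ) :
    hLK 0 (1/4) ((R t).mulVec v) = hLK 0 (1/4) v := by
  rw [mulVec_eval, hval, hval]
  have h1 : Real.cosh t ^ 2 - Real.sinh t ^ 2 = 1 := Real.cosh_sq_sub_sinh_sq t
  have h2 := hr2
  set c := Real.cosh t; set s := Real.sinh t; set r := Real.sqrt 2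
  set x := v 0; set y := v 1
  simp only [Matrix.cons_val_zero, Matrix.cons_val_one, Matrix.head_cons]
  have key : (c * x + s / r * y)^2 - (r * s * x + c * y)^2/2 = x^2 - y^2/2 := by
    rw [div_aux]
    linear_combination (x^2 - y^2/2) * h1 + (s^2*y^2/4 - s^2*x^2/2) * h2
  rw [key]

/-- The parametrizing curve. -/
def γ (t : ℝ) : Fin 2 → ℝ := ![Real.cosh t, Real.sqrt 2 * Real.sinh t]

lemma γ_zero : γ 0 = ![1, 0] := by
  funext i; fin_cases i <;> simp [γ]

lemma R_γ (t s : ℝ) : (R t).mulVec (γ s) = γ (t + s) := by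
  rw [mulVec_eval]
  funext i
  fin_cases i
  · show Real.cosh t * Real.cosh s + Real.sinh t / Real.sqrt 2 * (Real.sqrt 2 * Real.sinh s)
      = Real.cosh (t + s)
    rw [mul_aux, Real.cosh_add]
  · show Real.sqrt 2 * Real.sinh t * Real.cosh s + Real.cosh t * (Real.sqrt 2 * Real.sinh s)
      = Real.sqrt 2 * Real.sinh (t + s)
    rw [Real.sinh_add]; ring

def S : Set (Fin 2 → ℝ) := {p | hLK 0 (1/4) p = 1 ∧ hessDet2 (hLK 0 (1/4)) p < 0}

lemma γ_mem_S (t : ℝ) : γ t ∈ S := by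
  have h1 : Real.cosh t ^ 2 - Real.sinh t ^ 2 = 1 := Real.cosh_sq_sub_sinh_sq t
  have h2 := hr2
  have e0 : γ t 0 = Real.cosh t := rfl
  have e1 : γ t 1 = Real.sqrt 2 * Real.sinh t := rfl
  have e : (Real.sqrt 2 * Real.sinh t)^2 = 2 * Real.sinh t^2 := by
    rw [mul_pow, hr2]
  constructor
  · rw [hval, e0, e1, show Real.cosh t^2 - (Real.sqrt 2 * Real.sinh t)^2/2 = 1 by
      rw [e]; linarith]
    norm_num
  · rw [hessDet2_h, e0, e1, show 2*Real.cosh t^2 - (Real.sqrt 2 * Real.sinh t)^2 = 2 by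
      rw [e]; linarith]
    norm_num

lemma γ_cont : Continuous γ := by
  apply continuous_pi
  intro i
  fin_cases i <;> simp [γ] <;> fun_prop

lemma range_γ_subset : Set.range γ ⊆ Hcurve 0 (1/4) := by
  apply IsPreconnected.subset_connectedComponentIn
  · rw [← Set.image_univ]
    exact isPreconnected_univ.image γ γ_cont.continuousOn
  · exact ⟨0, γ_zero⟩
  · rintro p ⟨t, rfl⟩; exact γ_mem_S t

lemma base_mem_S : (![1, 0] : Fin 2 → ℝ) ∈ S := by
  have := γ_mem_S 0
  rwa [γ_zero] at this

lemma H_subset_range : Hcurve 0 (1/4) ⊆ Set.range γ := by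
  set U : Set (Fin 2 → ℝ) := {p | 0 < p 0 ∧ p 1^2 < 2*p 0^2} with hU
  set V : Set (Fin 2 → ℝ) := {p | p 0 < 0 ∨ 2*p 0^2 < p 1^2} with hV
  have hUopen : IsOpen U := by
    apply IsOpen.inter
    · exact isOpen_lt continuous_const (continuous_apply 0)
    · exact isOpen_lt ((continuous_apply 1).pow 2) (continuous_const.mul ((continuous_apply 0).pow 2))
  have hVopen : IsOpen V := by
    apply IsOpen.union
    · exact isOpen_lt (continuous_apply 0) continuous_const
    · exact isOpen_lt (continuous_const.mul ((continuous_apply 0).pow 2)) ((continuous_apply 1).pow 2)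
  have hdisj : Disjoint U V := by
    rw [Set.disjoint_left]
    rintro p ⟨h1, h2⟩ (h3 | h3) <;> linarith
  have hHS : Hcurve 0 (1/4) ⊆ S := connectedComponentIn_subset _ _
  have hsub : Hcurve 0 (1/4) ⊆ U ∪ V := by
    intro p hp
    obtain ⟨hh, -⟩ := hHS hp
    rw [hval] at hh
    have hcase : (p 0^2 - p 1^2/2 - 1) * (p 0^2 - p 1^2/2 + 1) = 0 := by nlinarith
    rcases mul_eq_zero.mp hcase with h | h
    · -- p0² − p1²/2 = 1
      have hp0 : p 0 ≠ 0 := by intro h0; rw [h0] at h; nlinarith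
      rcases hp0.lt_or_gt with h0 | h0
      · exact Or.inr (Or.inl h0)
      · exact Or.inl ⟨h0, by nlinarith⟩
    · exact Or.inr (Or.inr (by nlinarith))
  have hpre : IsPreconnected (Hcurve 0 (1/4)) := isPreconnected_connectedComponentIn
  rcases hpre.subset_or_subset hUopen hVopen hdisj hsub with hC | hC
  · intro p hp
    obtain ⟨hh, -⟩ := hHS hp
    obtain ⟨hp0, hp1⟩ := hC hp
    rw [hval] at hh
    have hw : p 0^2 - p 1^2/2 = 1 := by nlinarith
    refine ⟨Real.arsinh (p 1 / Real.sqrt 2), ?_⟩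
    have hsq : (p 1 / Real.sqrt 2)^2 = p 1^2 / 2 := by
      rw [div_pow, hr2]
    funext i
    fin_cases i
    · show Real.cosh (Real.arsinh (p 1 / Real.sqrt 2)) = p 0
      rw [Real.cosh_arsinh, hsq, show 1 + p 1^2/2 = p 0^2 by linarith,
        Real.sqrt_sq hp0.le]
    · show Real.sqrt 2 * Real.sinh (Real.arsinh (p 1 / Real.sqrt 2)) = p 1
      rw [Real.sinh_arsinh, mul_div_cancel₀ _ hrpos.ne']
  · exfalso
    have hbase : (![1, 0] : Fin 2 → ℝ) ∈ Hcurve 0 (1/4) :=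
      mem_connectedComponentIn base_mem_S
    have := hC hbase
    simp [hV] at this
    rcases this with h | h <;> norm_num at h

end HomogAux

/-- **Homogeneity of the curve `x⁴ − x²y² + (1/4)y⁴ = 1`.**
The hyperbolic rotations `R_t` are linear automorphisms of `h_{0,1/4}` and act transitively
on `H_{0,1/4}`; in particular `H_{0,1/4}` is a homogeneous space under linear
automorphisms of `h_{0,1/4}`. -/
theorem homogeneity_curve_a :
    (∀ (t : ℝ) (v : Fin 2 → ℝ),
      hLK 0 (1/4) ((!![Real.cosh t, Real.sinh t / Real.sqrt 2;
        Real.sqrt 2 * Real.sinh t, Real.cosh t]).mulVec v) = hLK 0 (1/4) v) ∧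
    (∀ p ∈ Hcurve 0 (1/4), ∀ q ∈ Hcurve 0 (1/4), ∃ t : ℝ,
      (!![Real.cosh t, Real.sinh t / Real.sqrt 2;
        Real.sqrt 2 * Real.sinh t, Real.cosh t]).mulVec p = q) := by
  constructor
  · exact HomogAux.invariance
  · intro p hp q hq
    obtain ⟨s, rfl⟩ := HomogAux.H_subset_range hp
    obtain ⟨u, rfl⟩ := HomogAux.H_subset_range hq
    exact ⟨u - s, by rw [show (!![Real.cosh (u-s), Real.sinh (u-s) / Real.sqrt 2;
      Real.sqrt 2 * Real.sinh (u-s), Real.cosh (u-s)]) = HomogAux.R (u-s) from rfl,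
      HomogAux.R_γ, sub_add_cancel]⟩
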